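/- The function u(y) = π/2 − arctan(e^{−y}) satisfies the ODE −u''(y) + (1/4) sin(4u(y)) = 0 for all y ∈ ℝ, together with u(0) = π/4, u(y) → 0 as y → −∞, and u(y) → π/2 as y → +∞. -/

import Mathlib

open Real Filter

noncomputable def uDW (y : ℝ) : ℝ := Real.pi/2 - Real.arctan (Real.exp (-y))

lemma hd1 (y : ℝ) : HasDerivAt uDW (Real.exp (-y) / (1 + Real.exp (-y) ^ 2)) y := by
  have he : HasDerivAt (fun y : ℝ => Real.exp (-y)) (-Real.exp (-y)) y := by
    convert (hasDerivAt_neg y).exp using 1; ring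
  have h := (Real.hasDerivAt_arctan (Real.exp (-y))).comp y he
  have h2 := (hasDerivAt_const y (Real.pi/2)).sub h
  refine h2.congr_deriv ?_
  ring

lemma hderiv : deriv uDW = fun y => Real.exp (-y) / (1 + Real.exp (-y) ^ 2) :=
  funext fun y => (hd1 y).deriv

lemma hd2 (y : ℝ) :
    HasDerivAt (deriv uDW)
      ((Real.exp (-y) ^ 3 - Real.exp (-y)) / (1 + Real.exp (-y) ^ 2) ^ 2) y := by
  rw [hderiv]
  set t := Real.exp (-y) with ht
  have he : HasDerivAt (fun y : ℝ => Real.exp (-y)) (-t) y := by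
    convert (hasDerivAt_neg y).exp using 1; rw [ht]; ring
  have hden : HasDerivAt (fun y : ℝ => 1 + Real.exp (-y) ^ 2) (2 * t * (-t)) y := by
    refine ((hasDerivAt_const y (1:ℝ)).add (he.pow 2)).congr_deriv ?_
    simp only [ht]; norm_num
  have hpos : (0:ℝ) < 1 + t ^ 2 := by positivity
  have h := he.div hden hpos.ne'
  refine h.congr_deriv ?_
  simp only [ht]
  field_simp
  ring

theorem stmt_2 :
    (∀ y : ℝ, -(deriv (deriv uDW) y) + (1/4) * Real.sin (4 * uDW y) = 0) ∧
    uDW 0 = Real.pi/4 ∧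
    Tendsto uDW atBot (nhds 0) ∧
    Tendsto uDW atTop (nhds (Real.pi/2)) := by
  refine ⟨?_, ?_, ?_, ?_⟩
  · intro y
    rw [(hd2 y).deriv]
    set t := Real.exp (-y) with ht
    have hpos : (0:ℝ) < 1 + t ^ 2 := by positivity
    have hsin : Real.sin (4 * uDW y) = 4 * t * (t ^ 2 - 1) / (1 + t ^ 2) ^ 2 := by
      have : 4 * uDW y = 2 * Real.pi - 2 * (2 * Real.arctan t) := by
        simp [uDW]; ring
      have hs : Real.sqrt (1 + t ^ 2) ^ 2 = 1 + t ^ 2 := Real.sq_sqrt hpos.le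
      have hs0 : Real.sqrt (1 + t ^ 2) ≠ 0 := by positivity
      have c2 : Real.cos (2 * Real.arctan t) = (1 - t ^ 2) / (1 + t ^ 2) := by
        rw [Real.cos_two_mul, Real.cos_arctan]
        field_simp
        rw [hs]; ring
      have s2 : Real.sin (2 * Real.arctan t) = 2 * t / (1 + t ^ 2) := by
        rw [Real.sin_two_mul, Real.sin_arctan, Real.cos_arctan]
        field_simp
        rw [hs]
      rw [this, Real.sin_sub, Real.sin_two_pi, Real.cos_two_pi, Real.sin_two_mul, s2, c2]
      field_simp
      ring
    rw [hsin]
    field_simp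
    ring
  · simp [uDW, Real.arctan_one]; ring
  · have h1 : Tendsto (fun y : ℝ => Real.exp (-y)) atBot atTop :=
      Real.tendsto_exp_atTop.comp tendsto_neg_atBot_atTop
    have h2 : Tendsto uDW atBot (nhds (Real.pi/2 - Real.pi/2)) := by
      exact tendsto_const_nhds.sub
        ((Real.tendsto_arctan_atTop.mono_right nhdsWithin_le_nhds).comp h1)
    simpa using h2
  · have h1 : Tendsto (fun y : ℝ => Real.exp (-y)) atTop (nhds 0) :=
      Real.tendsto_exp_atBot.comp tendsto_neg_atTop_atBot
    have h2 : Tendsto uDW atTop (nhds (Real.pi/2 - Real.arctan 0)) :=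
      tendsto_const_nhds.sub ((Real.continuous_arctan.tendsto 0).comp h1)
    simpa using h2
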